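/- Suppose there is a random element Z such that P(X₁ ∈ A₁,...,X_p ∈ A_p) = E[Π_{i=1}^p P(X_i ∈ A_i | Z)] for all Borel A₁,...,A_p ⊆ ℝ. Define λ₀ on measurable rectangles by λ₀(A₁ × ⋯ × A_{2p}) = E[Π_{i=1}^p P(X_i ∈ A_i | Z) · Π_{i=1}^p P(X_i ∈ A_{p+i} | Z)]. Then λ₀ extends uniquely to a probability measure λ on ℝ^{2p} which is F-invariant and whose first-p-coordinate marginal equals L(X); hence λ ∈ Λ, i.e., λ is a knockoff distribution for X. -/

import Mathlib

open MeasureTheory Set ProbabilityTheory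
open scoped ENNReal

/-- The swap map `f_S` on `ℝ^p × ℝ^p`. -/
noncomputable def swapMap (p : ℕ) (S : Finset (Fin p)) :
    ((Fin p → ℝ) × (Fin p → ℝ)) → ((Fin p → ℝ) × (Fin p → ℝ)) :=
  fun z => (fun i => if i ∈ S then z.2 i else z.1 i,
            fun i => if i ∈ S then z.1 i else z.2 i)

section Aux

variable {𝒵 : Type*} [MeasurableSpace 𝒵] {p : ℕ}

/-- Measurability of `z ↦ Measure.pi (fun i => κ i z)`. -/
lemma measurable_piMeasure (κ : Fin p → Kernel 𝒵 ℝ) [∀ i, IsMarkovKernel (κ i)] :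
    Measurable fun z => Measure.pi (fun i => κ i z) := by
  apply Measure.measurable_of_measurable_coe
  have hprob : ∀ z, IsProbabilityMeasure (Measure.pi fun i => κ i z) := fun z => inferInstance
  intro s hs
  refine MeasurableSpace.induction_on_inter
    (C := fun t _ => Measurable fun z => Measure.pi (fun i => κ i z) t)
    generateFrom_pi.symm isPiSystem_pi (by simp) ?_ ?_ ?_ s hs
  · rintro _ ⟨A, hA, rfl⟩
    simp only [Measure.pi_pi]
    exact Finset.measurable_prod _ fun i _ =>
      Kernel.measurable_coe (κ i) (hA i (mem_univ i))
  · intro t htm ih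
    have : ∀ z, Measure.pi (fun i => κ i z) tᶜ = 1 - Measure.pi (fun i => κ i z) t := by
      intro z
      rw [measure_compl htm (measure_ne_top _ _), measure_univ]
    simp only [this]
    exact measurable_const.sub ih
  · intro f hd hfm ih
    have : ∀ z, Measure.pi (fun i => κ i z) (⋃ n, f n) =
        ∑' n, Measure.pi (fun i => κ i z) (f n) := fun z => measure_iUnion hd hfm
    simp only [this]
    exact Measurable.ennreal_tsum ih

/-- The product kernel `z ↦ ⊗ᵢ κ i z`. -/
noncomputable def piKernel (κ : Fin p → Kernel 𝒵 ℝ) [∀ i, IsMarkovKernel (κ i)] :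
    Kernel 𝒵 (Fin p → ℝ) :=
  ⟨fun z => Measure.pi (fun i => κ i z), measurable_piMeasure κ⟩

lemma piKernel_apply (κ : Fin p → Kernel 𝒵 ℝ) [∀ i, IsMarkovKernel (κ i)] (z : 𝒵) :
    piKernel κ z = Measure.pi (fun i => κ i z) := rfl

instance (κ : Fin p → Kernel 𝒵 ℝ) [∀ i, IsMarkovKernel (κ i)] :
    IsMarkovKernel (piKernel κ) :=
  ⟨fun z => by rw [piKernel_apply]; infer_instance⟩

/-- Rectangles as product sets. -/
lemma rect_eq (A B : Fin p → Set ℝ) :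
    {z : (Fin p → ℝ) × (Fin p → ℝ) | (∀ i, z.1 i ∈ A i) ∧ (∀ i, z.2 i ∈ B i)} =
      (univ.pi A) ×ˢ (univ.pi B) := by
  ext z; simp [Set.mem_pi]

/-- Uniqueness: two probability measures agreeing on all rectangles are equal. -/
lemma prob_ext_of_rect (μ ν : Measure ((Fin p → ℝ) × (Fin p → ℝ)))
    [IsProbabilityMeasure μ] [IsProbabilityMeasure ν]
    (h : ∀ A B : Fin p → Set ℝ, (∀ i, MeasurableSet (A i)) → (∀ i, MeasurableSet (B i)) →
      μ ((univ.pi A) ×ˢ (univ.pi B)) = ν ((univ.pi A) ×ˢ (univ.pi B))) : μ = ν := by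
  have hcs : IsCountablySpanning
      (pi univ '' pi univ fun _ : Fin p => { s : Set ℝ | MeasurableSet s }) :=
    IsCountablySpanning.pi fun _ => isCountablySpanning_measurableSet
  refine ext_of_generate_finite _
    ((generateFrom_eq_prod generateFrom_pi generateFrom_pi hcs hcs).symm)
    (isPiSystem_pi.prod isPiSystem_pi) ?_ (by simp)
  rintro _ ⟨_, ⟨A, hA, rfl⟩, _, ⟨B, hB, rfl⟩, rfl⟩
  exact h A B (fun i => hA i (mem_univ i)) (fun i => hB i (mem_univ i))

end Aux

lemma measurable_swapMap (p : ℕ) (S : Finset (Fin p)) : Measurable (swapMap p S) := by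
  refine Measurable.prod ?_ ?_
  · refine measurable_pi_lambda _ fun i => ?_
    by_cases hi : i ∈ S <;> simp only [swapMap, hi, if_true, if_false]
    · exact (measurable_pi_apply i).comp measurable_snd
    · exact (measurable_pi_apply i).comp measurable_fst
  · refine measurable_pi_lambda _ fun i => ?_
    by_cases hi : i ∈ S <;> simp only [swapMap, hi, if_true, if_false]
    · exact (measurable_pi_apply i).comp measurable_fst
    · exact (measurable_pi_apply i).comp measurable_snd

/-- Conditional independence construction: if `P(X₁∈A₁,…,X_p∈A_p) = E[∏ P(X_i∈A_i|Z)]`,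
then `λ₀(A₁×⋯×A_{2p}) = E[∏ P(X_i∈A_i|Z) ∏ P(X_i∈A_{p+i}|Z)]` extends uniquely to a
probability measure `λ` on `ℝ^{2p}` which is `F`-invariant with first-`p` marginal
`L(X)`; hence `λ ∈ Λ`. -/
theorem conditional_independence_knockoff
    {Ω 𝒵 : Type*} [MeasurableSpace Ω] [MeasurableSpace 𝒵]
    (P : Measure Ω) [IsProbabilityMeasure P] (p : ℕ) (hp : 2 ≤ p)
    (X : Ω → (Fin p → ℝ)) (hX : Measurable X)
    (Z : Ω → 𝒵) (hZ : Measurable Z)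
    (κ : Fin p → Kernel 𝒵 ℝ) [∀ i, IsMarkovKernel (κ i)]
    (hci : ∀ A : Fin p → Set ℝ, (∀ i, MeasurableSet (A i)) →
      P.map X {x | ∀ i, x i ∈ A i} = ∫⁻ z, ∏ i, κ i z (A i) ∂(P.map Z)) :
    ∃ lam : Measure ((Fin p → ℝ) × (Fin p → ℝ)),
      (IsProbabilityMeasure lam ∧
        (∀ A B : Fin p → Set ℝ, (∀ i, MeasurableSet (A i)) →
          (∀ i, MeasurableSet (B i)) →
          lam {z | (∀ i, z.1 i ∈ A i) ∧ (∀ i, z.2 i ∈ B i)} =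
            ∫⁻ z, (∏ i, κ i z (A i)) * ∏ i, κ i z (B i) ∂(P.map Z)) ∧
        (∀ S : Finset (Fin p), lam.map (swapMap p S) = lam) ∧
        lam.map Prod.fst = P.map X) ∧
      ∀ lam' : Measure ((Fin p → ℝ) × (Fin p → ℝ)), IsProbabilityMeasure lam' →
        (∀ A B : Fin p → Set ℝ, (∀ i, MeasurableSet (A i)) →
          (∀ i, MeasurableSet (B i)) →
          lam' {z | (∀ i, z.1 i ∈ A i) ∧ (∀ i, z.2 i ∈ B i)} =
            ∫⁻ z, (∏ i, κ i z (A i)) * ∏ i, κ i z (B i) ∂(P.map Z)) →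
        lam' = lam := by
  classical
  haveI : IsProbabilityMeasure (P.map Z) := Measure.isProbabilityMeasure_map hZ.aemeasurable
  haveI : IsProbabilityMeasure (P.map X) := Measure.isProbabilityMeasure_map hX.aemeasurable
  set k : Kernel 𝒵 ((Fin p → ℝ) × (Fin p → ℝ)) := (piKernel κ) ×ₖ (piKernel κ) with hk
  set lam : Measure ((Fin p → ℝ) × (Fin p → ℝ)) := (P.map Z).bind (fun z => k z) with hlam
  have hbind : ∀ s, MeasurableSet s → lam s = ∫⁻ z, k z s ∂(P.map Z) := fun s hs =>
    Measure.bind_apply hs k.measurable.aemeasurable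
  have hkrect : ∀ (A B : Fin p → Set ℝ) z,
      k z ((univ.pi A) ×ˢ (univ.pi B)) = (∏ i, κ i z (A i)) * ∏ i, κ i z (B i) := by
    intro A B z
    rw [hk, Kernel.prod_apply, piKernel_apply, Measure.prod_prod, Measure.pi_pi, Measure.pi_pi]
  haveI hlamprob : IsProbabilityMeasure lam := by
    constructor
    rw [hbind _ MeasurableSet.univ]
    simp [measure_univ]
  have hrect : ∀ A B : Fin p → Set ℝ, (∀ i, MeasurableSet (A i)) → (∀ i, MeasurableSet (B i)) →
      lam {z | (∀ i, z.1 i ∈ A i) ∧ (∀ i, z.2 i ∈ B i)} =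
        ∫⁻ z, (∏ i, κ i z (A i)) * ∏ i, κ i z (B i) ∂(P.map Z) := by
    intro A B hA hB
    rw [rect_eq, hbind _ ((MeasurableSet.univ_pi hA).prod (MeasurableSet.univ_pi hB))]
    exact lintegral_congr fun z => hkrect A B z
  have hrect' : ∀ A B : Fin p → Set ℝ, (∀ i, MeasurableSet (A i)) → (∀ i, MeasurableSet (B i)) →
      lam ((univ.pi A) ×ˢ (univ.pi B)) =
        ∫⁻ z, (∏ i, κ i z (A i)) * ∏ i, κ i z (B i) ∂(P.map Z) := by
    intro A B hA hB
    rw [← rect_eq]; exact hrect A B hA hB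
  refine ⟨lam, ⟨hlamprob, hrect, ?_, ?_⟩, ?_⟩
  · -- swap invariance
    intro S
    haveI : IsProbabilityMeasure (lam.map (swapMap p S)) :=
      Measure.isProbabilityMeasure_map (measurable_swapMap p S).aemeasurable
    refine prob_ext_of_rect _ _ ?_
    intro A B hA hB
    set A' : Fin p → Set ℝ := fun i => if i ∈ S then B i else A i with hA'
    set B' : Fin p → Set ℝ := fun i => if i ∈ S then A i else B i with hB'
    have hA'm : ∀ i, MeasurableSet (A' i) := fun i => by
      by_cases hi : i ∈ S <;> simp [hA', hi, hA i, hB i]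
    have hB'm : ∀ i, MeasurableSet (B' i) := fun i => by
      by_cases hi : i ∈ S <;> simp [hB', hi, hA i, hB i]
    have hpre : swapMap p S ⁻¹' ((univ.pi A) ×ˢ (univ.pi B)) =
        (univ.pi A') ×ˢ (univ.pi B') := by
      ext z
      simp only [swapMap, mem_preimage, mem_prod, mem_univ_pi, hA', hB']
      rw [← forall_and, ← forall_and]
      refine forall_congr' fun i => ?_
      by_cases hi : i ∈ S <;> simp [hi, and_comm]
    rw [Measure.map_apply (measurable_swapMap p S)
      ((MeasurableSet.univ_pi hA).prod (MeasurableSet.univ_pi hB)), hpre,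
      hrect' A' B' hA'm hB'm, hrect' A B hA hB]
    refine lintegral_congr fun z => ?_
    rw [← Finset.prod_mul_distrib, ← Finset.prod_mul_distrib]
    refine Finset.prod_congr rfl fun i _ => ?_
    by_cases hi : i ∈ S <;> simp [hA', hB', hi, mul_comm]
  · -- marginal
    haveI : IsProbabilityMeasure (lam.map (Prod.fst :
        ((Fin p → ℝ) × (Fin p → ℝ)) → (Fin p → ℝ))) :=
      Measure.isProbabilityMeasure_map measurable_fst.aemeasurable
    refine ext_of_generate_finite _ generateFrom_pi.symm isPiSystem_pi ?_ (by simp)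
    rintro _ ⟨A, hA, rfl⟩
    have hAm : ∀ i, MeasurableSet (A i) := fun i => hA i (mem_univ i)
    have h1 : (Prod.fst : ((Fin p → ℝ) × (Fin p → ℝ)) → (Fin p → ℝ)) ⁻¹' (univ.pi A) =
        (univ.pi A) ×ˢ (univ.pi fun _ : Fin p => (univ : Set ℝ)) := by
      ext z; simp [Set.mem_pi]
    rw [Measure.map_apply measurable_fst (MeasurableSet.univ_pi hAm), h1,
      hrect' A _ hAm (fun _ => MeasurableSet.univ)]
    have h2 : {x : Fin p → ℝ | ∀ i, x i ∈ A i} = univ.pi A := by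
      ext x; simp [Set.mem_pi]
    rw [← h2, hci A hAm]
    exact (lintegral_congr fun z => by simp [measure_univ]).symm
  · -- uniqueness
    intro lam' hlam' hrect''
    haveI := hlam'
    refine prob_ext_of_rect _ _ ?_
    intro A B hA hB
    rw [← rect_eq, hrect'' A B hA hB, hrect A B hA hB]
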